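/- Let L ≥ 2 be a natural number and let λ denote the exponent of the multiplicative group of units (ℤ/Lℤ)ˣ (the maximal multiplicative order of an element mod L). Then every multiset of elements of (ℤ/Lℤ)ˣ whose cardinality is at least λ·(1 + log(L/λ)) contains a nonempty sub-multiset whose product of elements equals 1. -/

import Mathlib

open Finset in
noncomputable def cfun (m n : ℕ) : ℝ :=
  if n + 1 ≤ m then (n + 1 : ℝ) else (m : ℝ) * ((m : ℝ) / ((m : ℝ) - 1)) ^ (n + 1 - m)

section cfun
variable {m n : ℕ}

lemma cfun_pos (hm : 2 ≤ m) : 0 < cfun m n := by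
  unfold cfun
  split
  · positivity
  · have h1 : (1:ℝ) ≤ (m:ℝ) - 1 := by
      have : (2:ℝ) ≤ (m:ℝ) := by exact_mod_cast hm
      linarith
    positivity

lemma cfun_eq_of_le (h : m ≤ n + 1) :
    cfun m n = (m : ℝ) * ((m : ℝ) / ((m : ℝ) - 1)) ^ (n + 1 - m) := by
  unfold cfun
  split
  · have hnm : n + 1 = m := le_antisymm (by omega) h
    rw [hnm, Nat.sub_self, pow_zero, mul_one]
    exact_mod_cast hnm
  · rfl

lemma cfun_step (hm : 2 ≤ m) (h : m ≤ n + 1) :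
    cfun m (n + 1) * (1 - 1 / (m : ℝ)) = cfun m n := by
  have hm0 : (0:ℝ) < m := by positivity
  have hm1 : (0:ℝ) < (m:ℝ) - 1 := by
    have : (2:ℝ) ≤ (m:ℝ) := by exact_mod_cast hm
    linarith
  rw [cfun_eq_of_le (by omega), cfun_eq_of_le h]
  have hsub : n + 1 + 1 - m = (n + 1 - m) + 1 := by omega
  rw [hsub, pow_succ]
  have : (1 : ℝ) - 1 / m = ((m:ℝ) - 1) / m := by field_simp
  rw [this]
  field_simp

end cfun

section kill
variable {G : Type*} [CommGroup G]

lemma kill_lemma (m : ℕ) (hm : 2 ≤ m) (hGm : ∀ g : G, g ^ m = 1) :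
    ∀ (n : ℕ) (gs : Fin n → G) (V : Finset (G →* ℂˣ)),
      (V.card : ℝ) < cfun m n →
      ∃ ws : Fin n → ℂ, ∀ χ ∈ V, (∏ i, (1 + ws i * ((χ (gs i) : ℂˣ) : ℂ))) = 0 := by
  classical
  intro n
  induction n with
  | zero =>
    intro gs V hV
    have h0 : cfun m 0 = 1 := by unfold cfun; rw [if_pos (by omega)]; norm_num
    rw [h0] at hV
    have hV0 : V.card = 0 := by exact_mod_cast Nat.lt_one_iff.mp (by exact_mod_cast hV)
    rw [Finset.card_eq_zero] at hV0
    subst hV0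
    exact ⟨fun _ => 0, fun χ hχ => absurd hχ (Finset.notMem_empty χ)⟩
  | succ n ih =>
    intro gs V hV
    rcases V.eq_empty_or_nonempty with rfl | hne
    · obtain ⟨ws', _⟩ := ih (fun i => gs i.succ) ∅
        (by simpa using cfun_pos (m := m) (n := n) hm)
      exact ⟨Fin.cons 0 ws', fun χ hχ => absurd hχ (Finset.notMem_empty χ)⟩
    · set vfun : (G →* ℂˣ) → ℂ := fun χ => ((χ (gs 0) : ℂˣ) : ℂ) with hvfun
      obtain ⟨z, hzval, hzmax⟩ :=
        Finset.exists_max_image (V.image vfun) (fun z => (V.filter (fun χ => vfun χ = z)).card)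
          (hne.image vfun)
      set F := V.filter (fun χ => vfun χ = z) with hF
      set V' := V.filter (fun χ => ¬ (vfun χ = z)) with hV'
      obtain ⟨χ₀, hχ₀V, hχ₀z⟩ := Finset.mem_image.mp hzval
      have hFne : F.Nonempty := ⟨χ₀, Finset.mem_filter.mpr ⟨hχ₀V, hχ₀z⟩⟩
      have hz0 : z ≠ 0 := hχ₀z ▸ Units.ne_zero _
      have hsplit : F.card + V'.card = V.card :=
        Finset.card_filter_add_card_filter_not _
      -- V.card ≤ m * F.card
      have hcount : V.card ≤ m * F.card := by
        have h1 : V.card = ∑ z' ∈ V.image vfun, (V.filter (fun χ => vfun χ = z')).card :=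
          Finset.card_eq_sum_card_fiberwise (fun χ hχ => Finset.mem_image_of_mem vfun hχ)
        have h2 : ∑ z' ∈ V.image vfun, (V.filter (fun χ => vfun χ = z')).card
            ≤ (V.image vfun).card • F.card :=
          Finset.sum_le_card_nsmul _ _ _ (fun z' hz' => hzmax z' hz')
        have h3 : (V.image vfun).card ≤ m := by
          have hsub : V.image vfun ⊆ Polynomial.nthRootsFinset m (1 : ℂ) := by
            intro y hy
            obtain ⟨χ, hχ, rfl⟩ := Finset.mem_image.mp hy
            rw [Polynomial.mem_nthRootsFinset (by omega : 0 < m)]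
            have : (χ (gs 0)) ^ m = χ ((gs 0) ^ m) := by rw [map_pow]
            calc (vfun χ) ^ m = (((χ (gs 0)) ^ m : ℂˣ) : ℂ) := by
                  rw [hvfun]; push_cast; ring
              _ = ((χ ((gs 0) ^ m) : ℂˣ) : ℂ) := by rw [map_pow]
              _ = ((χ 1 : ℂˣ) : ℂ) := by rw [hGm]
              _ = 1 := by simp
          calc (V.image vfun).card ≤ (Polynomial.nthRootsFinset m (1 : ℂ)).card :=
                Finset.card_le_card hsub
            _ ≤ m := by
                have := Multiset.toFinset_card_le (Polynomial.nthRoots m (1 : ℂ))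
                have h4 := Polynomial.card_nthRoots m (1 : ℂ)
                unfold Polynomial.nthRootsFinset
                omega
        calc V.card ≤ (V.image vfun).card • F.card := h1 ▸ h2
          _ = (V.image vfun).card * F.card := smul_eq_mul _ _
          _ ≤ m * F.card := Nat.mul_le_mul_right _ h3
      -- recursion condition
      have hrec : (V'.card : ℝ) < cfun m n := by
        rcases lt_or_ge (n + 1) m with hsm | hbig
        · have e1 : cfun m (n+1) = ((n:ℝ) + 1 + 1) := by
            unfold cfun; rw [if_pos (by omega)]; push_cast; ring
          have e2 : cfun m n = ((n:ℝ) + 1) := by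
            unfold cfun; rw [if_pos (by omega)]
          have hVn : V.card ≤ n + 1 := by
            have : (V.card : ℝ) < (n:ℝ) + 1 + 1 := e1 ▸ hV
            exact_mod_cast Nat.lt_succ_iff.mp (by exact_mod_cast this)
          have : V'.card ≤ n := by
            have := hFne.card_pos
            omega
          rw [e2]
          calc (V'.card : ℝ) ≤ (n : ℝ) := by exact_mod_cast this
            _ < (n : ℝ) + 1 := by linarith
        · have hm0 : (0:ℝ) < m := by positivity
          have h1m : (0:ℝ) < 1 - 1/(m:ℝ) := by
            rw [sub_pos, div_lt_one hm0]
            exact_mod_cast by omega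
          have hdiv : (V.card : ℝ) / m ≤ F.card := by
            rw [div_le_iff₀ hm0]
            calc (V.card : ℝ) ≤ (m * F.card : ℕ) := by exact_mod_cast hcount
              _ = (F.card : ℝ) * m := by push_cast; ring
          have hV'F : (V'.card : ℝ) = (V.card : ℝ) - F.card := by
            have : (F.card : ℝ) + V'.card = V.card := by exact_mod_cast hsplit
            linarith
          calc (V'.card : ℝ) = (V.card : ℝ) - F.card := hV'F
            _ ≤ (V.card : ℝ) - (V.card : ℝ)/m := by linarith
            _ = (V.card : ℝ) * (1 - 1/m) := by ring
            _ < cfun m (n+1) * (1 - 1/m) := by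
                exact mul_lt_mul_of_pos_right hV h1m
            _ = cfun m n := cfun_step hm hbig
      obtain ⟨ws', hws'⟩ := ih (fun i => gs i.succ) V' hrec
      refine ⟨Fin.cons (-z⁻¹) ws', fun χ hχ => ?_⟩
      rw [Fin.prod_univ_succ]
      simp only [Fin.cons_zero, Fin.cons_succ]
      by_cases hzχ : vfun χ = z
      · have : (1 + (-z⁻¹) * ((χ (gs 0) : ℂˣ) : ℂ)) = 0 := by
          rw [show ((χ (gs 0) : ℂˣ) : ℂ) = z from hzχ]
          field_simp
          norm_num
        rw [this, zero_mul]
      · have hχV' : χ ∈ V' := Finset.mem_filter.mpr ⟨hχ, hzχ⟩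
        rw [hws' χ hχV', mul_zero]

end kill

section main
variable {G : Type*} [CommGroup G]

/-- Evaluation of characters at a point, as a monoid hom on the character group. -/
noncomputable def evHom (x : G) : (G →* ℂˣ) →* ℂ where
  toFun χ := ((χ x : ℂˣ) : ℂ)
  map_one' := by simp
  map_mul' χ ψ := by simp [MonoidHom.mul_apply]

lemma expand_prod (n : ℕ) (gs : Fin n → G) (ws : Fin n → ℂ) (χ : G →* ℂˣ) :
    (∏ i, (1 + ws i * ((χ (gs i) : ℂˣ) : ℂ)))
      = ∑ t ∈ (Finset.univ : Finset (Fin n)).powerset,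
          (∏ i ∈ t, ws i) * ((χ (∏ i ∈ t, gs i) : ℂˣ) : ℂ) := by
  classical
  calc (∏ i, (1 + ws i * ((χ (gs i) : ℂˣ) : ℂ)))
      = ∏ i, ((ws i * ((χ (gs i) : ℂˣ) : ℂ)) + 1) :=
        Finset.prod_congr rfl (fun i _ => add_comm _ _)
    _ = ∑ t ∈ (Finset.univ : Finset (Fin n)).powerset,
          (∏ i ∈ t, ws i * ((χ (gs i) : ℂˣ) : ℂ)) * ∏ _i ∈ Finset.univ \ t, (1:ℂ) :=
        Finset.prod_add _ _ _
    _ = ∑ t ∈ (Finset.univ : Finset (Fin n)).powerset,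
          (∏ i ∈ t, ws i) * ((χ (∏ i ∈ t, gs i) : ℂˣ) : ℂ) := by
        apply Finset.sum_congr rfl
        intro t _
        rw [Finset.prod_const_one, mul_one, Finset.prod_mul_distrib]
        congr 1
        calc ∏ i ∈ t, ((χ (gs i) : ℂˣ) : ℂ)
            = ∏ i ∈ t, (Units.coeHom ℂ) (χ (gs i)) := rfl
          _ = (Units.coeHom ℂ) (∏ i ∈ t, χ (gs i)) := (map_prod (Units.coeHom ℂ) _ _).symm
          _ = ((χ (∏ i ∈ t, gs i) : ℂˣ) : ℂ) := by rw [← map_prod χ]; rfl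

theorem vEBK_core' [Fintype G] (S : Multiset G)
    (hS : ∀ T ≤ S, T ≠ 0 → T.prod ≠ 1) :
    (Monoid.exponent G : ℝ) * Real.exp ((Multiset.card S : ℝ) / (Monoid.exponent G) - 1)
      ≤ Fintype.card G := by
  classical
  set m := Monoid.exponent G with hmdef
  have hm0 : m ≠ 0 := Monoid.exponent_ne_zero_of_finite
  have hcard1 : (1:ℝ) ≤ Fintype.card G := by exact_mod_cast Fintype.card_pos
  rcases eq_or_lt_of_le (Nat.one_le_iff_ne_zero.mpr hm0) with hm1 | hm2
  · -- m = 1 : trivial group, S must be empty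
    have hgs : ∀ g : G, g = 1 := fun g => by
      have h := Monoid.pow_exponent_eq_one g
      rwa [← hmdef, ← hm1, pow_one] at h
    have hS0 : S = 0 := by
      by_contra h
      obtain ⟨x, hx⟩ := Multiset.exists_mem_of_ne_zero h
      exact hS {x} (Multiset.singleton_le.mpr hx) (by simp)
        (by rw [Multiset.prod_singleton, hgs x])
    rw [hS0, ← hm1]
    simp only [Multiset.card_zero, Nat.cast_zero, Nat.cast_one, one_mul]
    calc Real.exp ((0:ℝ)/1 - 1) ≤ 1 := by
          rw [Real.exp_le_one_iff]; norm_num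
      _ ≤ _ := hcard1
  · -- 2 ≤ m
    have hm2' : 2 ≤ m := hm2
    have hm0R : (0:ℝ) < m := by positivity
    have hmle : m ≤ Fintype.card G := Nat.le_of_dvd Fintype.card_pos Group.exponent_dvd_card
    set n := Multiset.card S with hndef
    rcases le_or_gt (n:ℝ) (m:ℝ) with hnm | hnm
    · -- small case
      calc (m:ℝ) * Real.exp ((n:ℝ)/m - 1) ≤ (m:ℝ) * 1 := by
            apply mul_le_mul_of_nonneg_left _ (le_of_lt hm0R)
            rw [Real.exp_le_one_iff]
            rw [sub_nonpos, div_le_one hm0R]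
            exact hnm
        _ ≤ Fintype.card G := by
            rw [mul_one]; exact_mod_cast hmle
    · -- big case : m < n
      have hmn : m < n := by exact_mod_cast hnm
      have key : cfun m n ≤ (Fintype.card G : ℝ) := by
        by_contra hkey
        push_neg at hkey
        haveI : NeZero ((m : ℕ) : ℂ) := ⟨Nat.cast_ne_zero.mpr hm0⟩
        obtain ⟨e⟩ := CommGroup.monoidHom_mulEquiv_of_hasEnoughRootsOfUnity G ℂ
        haveI : Fintype (G →* ℂˣ) := Fintype.ofEquiv G e.toEquiv.symm
        have hXcard : Fintype.card (G →* ℂˣ) = Fintype.card G := Fintype.card_congr e.toEquiv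
        -- enumerate S
        set l := S.toList with hldef
        have hlen : l.length = n := Multiset.length_toList S
        set gs : Fin l.length → G := l.get with hgsdef
        have huniv : ((Finset.univ : Finset (Fin l.length)).val.map gs) = S := by
          rw [Fin.univ_def]
          show ((↑(List.finRange l.length) : Multiset (Fin l.length)).map gs) = S
          rw [Multiset.map_coe, ← List.ofFn_eq_map, List.ofFn_get, Multiset.coe_toList]
        obtain ⟨ws, hws⟩ := kill_lemma m hm2'
          (fun g => by rw [hmdef]; exact Monoid.pow_exponent_eq_one g) l.length gs Finset.univ
          (by
            rw [Finset.card_univ, hXcard, hlen]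
            exact hkey)
        set coef : G → ℂ := fun x =>
          ∑ t ∈ (Finset.univ : Finset (Fin l.length)).powerset.filter
              (fun t => (∏ i ∈ t, gs i) = x), ∏ i ∈ t, ws i with hcoefdef
        have hzero : ∀ χ : (G →* ℂˣ), ∑ x : G, coef x * ((χ x : ℂˣ) : ℂ) = 0 := by
          intro χ
          have h1 := hws χ (Finset.mem_univ χ)
          rw [expand_prod] at h1
          rw [← h1, ← Finset.sum_fiberwise_of_maps_to
            (fun t _ => Finset.mem_univ ((∏ i ∈ t, gs i)))
            (fun t => (∏ i ∈ t, ws i) * ((χ (∏ i ∈ t, gs i) : ℂˣ) : ℂ))]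
          apply Finset.sum_congr rfl
          intro x _
          rw [hcoefdef, Finset.sum_mul]
          apply Finset.sum_congr rfl
          intro t ht
          rw [(Finset.mem_filter.mp ht).2]
        have hfil : ((Finset.univ : Finset (Fin l.length)).powerset.filter
            (fun t => (∏ i ∈ t, gs i) = 1)) = {(∅ : Finset (Fin l.length))} := by
          apply Finset.eq_singleton_iff_unique_mem.mpr
          constructor
          · exact Finset.mem_filter.mpr
              ⟨Finset.mem_powerset.mpr (Finset.empty_subset _), by simp⟩
          · intro t ht
            by_contra hne
            obtain ⟨_, ht_prod⟩ := Finset.mem_filter.mp ht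
            have hTle : (t.val.map gs) ≤ S := by
              calc t.val.map gs
                  ≤ (Finset.univ : Finset (Fin l.length)).val.map gs :=
                    Multiset.map_le_map (Finset.val_le_iff.mpr (Finset.subset_univ t))
                _ = S := huniv
            have hTne : (t.val.map gs) ≠ 0 := by
              rw [Ne, Multiset.map_eq_zero, Finset.val_eq_zero]
              exact hne
            have hTprod : (t.val.map gs).prod = 1 := by
              rw [← Finset.prod_eq_multiset_prod]
              exact ht_prod
            exact hS _ hTle hTne hTprod
        have hcoef1 : coef 1 = 1 := by
          rw [hcoefdef]
          simp only [hfil, Finset.sum_singleton, Finset.prod_empty]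
        have hsep : Function.Injective (evHom (G := G)) := by
          intro x y hxy
          by_contra hne
          have hne1 : x * y⁻¹ ≠ 1 := fun h => hne (by
            have := mul_inv_eq_one.mp h
            exact this)
          obtain ⟨χ, hχ⟩ := CommGroup.exists_apply_ne_one_of_hasEnoughRootsOfUnity G ℂ hne1
          apply hχ
          have hval : ((χ x : ℂˣ) : ℂ) = ((χ y : ℂˣ) : ℂ) := by
            have := congrArg (fun (f : (G →* ℂˣ) →* ℂ) => f χ) hxy
            simpa [evHom] using this
          have hxy' : χ x = χ y := Units.ext hval
          rw [map_mul, map_inv, hxy', mul_inv_cancel]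
        have li : LinearIndependent ℂ (fun x : G => ⇑(evHom x)) :=
          (linearIndependent_monoidHom (G →* ℂˣ) ℂ).comp (evHom (G := G)) hsep
        have hsum : (∑ x : G, coef x • ⇑(evHom x)) = (0 : (G →* ℂˣ) → ℂ) := by
          funext χ
          rw [Finset.sum_apply]
          simpa [evHom, smul_eq_mul] using hzero χ
        have hall := Fintype.linearIndependent_iff.mp li coef hsum 1
        rw [hcoef1] at hall
        exact one_ne_zero hall
      -- arithmetic:  m * exp(n/m - 1) ≤ cfun m n
      have hm1R : (0:ℝ) < (m:ℝ) - 1 := by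
        have : (2:ℝ) ≤ (m:ℝ) := by exact_mod_cast hm2'
        linarith
      have hρ : Real.exp (1/(m:ℝ)) ≤ (m:ℝ)/((m:ℝ)-1) := by
        have hlog : Real.log (((m:ℝ)-1)/m) ≤ ((m:ℝ)-1)/m - 1 :=
          Real.log_le_sub_one_of_pos (by positivity)
        have h2 : ((m:ℝ)-1)/m - 1 = -(1/m) := by field_simp; ring
        have h3 : Real.log ((m:ℝ)/((m:ℝ)-1)) = - Real.log (((m:ℝ)-1)/m) := by
          rw [← Real.log_inv]
          congr 1
          field_simp
        have h4 : 1/(m:ℝ) ≤ Real.log ((m:ℝ)/((m:ℝ)-1)) := by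
          rw [h3]
          rw [h2] at hlog
          linarith
        calc Real.exp (1/(m:ℝ)) ≤ Real.exp (Real.log ((m:ℝ)/((m:ℝ)-1))) :=
              Real.exp_le_exp.mpr h4
          _ = (m:ℝ)/((m:ℝ)-1) := Real.exp_log (by positivity)
      have harith : (m:ℝ) * Real.exp ((n:ℝ)/m - 1) ≤ cfun m n := by
        rw [cfun_eq_of_le (by omega : m ≤ n + 1)]
        have hcast : ((n + 1 - m : ℕ):ℝ) = (n:ℝ) + 1 - m := by
          have h : m ≤ n + 1 := by omega
          push_cast [h]
          ring
        apply mul_le_mul_of_nonneg_left _ (le_of_lt hm0R)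
        calc Real.exp ((n:ℝ)/m - 1)
            ≤ Real.exp (((n + 1 - m : ℕ):ℝ)/m) := by
              apply Real.exp_le_exp.mpr
              rw [hcast, le_div_iff₀ hm0R, sub_mul, div_mul_cancel₀ _ (ne_of_gt hm0R)]
              linarith
          _ = Real.exp (1/(m:ℝ)) ^ (n + 1 - m : ℕ) := by
              rw [← Real.exp_nat_mul]
              congr 1
              field_simp
          _ ≤ ((m:ℝ)/((m:ℝ)-1)) ^ (n + 1 - m : ℕ) := by
              apply pow_le_pow_left₀ (Real.exp_nonneg _) hρ
      linarith
end main


/-- (van Emde Boas–Kruyswijk / Meshulam) If `λ` is the exponent of `(ℤ/Lℤ)ˣ`, then any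
multiset of elements of `(ℤ/Lℤ)ˣ` of cardinality at least `λ * (1 + log (L / λ))`
contains a nonempty sub-multiset whose product is `1`. -/
theorem davenport_bound (L : ℕ) (hL : 2 ≤ L)
    (M : Multiset (ZMod L)ˣ)
    (hM : (Monoid.exponent (ZMod L)ˣ : ℝ) *
        (1 + Real.log ((L : ℝ) / (Monoid.exponent (ZMod L)ˣ : ℝ))) ≤ (Multiset.card M : ℝ)) :
    ∃ M' ≤ M, M' ≠ 0 ∧ M'.prod = 1 := by
  haveI : NeZero L := ⟨by omega⟩
  by_contra hno
  push_neg at hno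
  set m : ℕ := Monoid.exponent (ZMod L)ˣ with hm
  have hm0 : m ≠ 0 := Monoid.exponent_ne_zero_of_finite
  have hmR : (0:ℝ) < m := by
    have : 0 < m := Nat.pos_of_ne_zero hm0
    exact_mod_cast this
  have hL0 : (0:ℝ) < L := by positivity
  have hLm : (0:ℝ) < (L:ℝ)/m := by positivity
  have h1 : Real.log ((L:ℝ)/m) ≤ (Multiset.card M : ℝ)/m - 1 := by
    have h1' : 1 + Real.log ((L:ℝ)/m) ≤ (Multiset.card M : ℝ)/m := by
      rw [le_div_iff₀ hmR]
      calc (1 + Real.log ((L:ℝ)/m)) * m = m * (1 + Real.log ((L:ℝ)/m)) := by ring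
      _ ≤ _ := hM
    linarith
  have h2 : (L:ℝ) ≤ m * Real.exp ((Multiset.card M : ℝ)/m - 1) := by
    have h2' := Real.exp_le_exp.2 h1
    rw [Real.exp_log hLm] at h2'
    calc (L:ℝ) = m * ((L:ℝ)/m) := by field_simp
    _ ≤ m * Real.exp ((Multiset.card M : ℝ)/m - 1) :=
        mul_le_mul_of_nonneg_left h2' (le_of_lt hmR)
  have h3 := vEBK_core' M (fun T hT hT0 => hno T hT hT0)
  have h4 : (Fintype.card (ZMod L)ˣ : ℝ) < L := by
    rw [ZMod.card_units_eq_totient]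
    exact_mod_cast Nat.totient_lt L hL
  rw [← hm] at h3
  linarith
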